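/- (Deterministic core of Theorem 2.) Let p be a probability distribution on {0,1}^n with Σ_x p(x)² ≤ α/2^n for some α ≥ 1, and let 0 < δ < 1. Write L = (10√α/δ) log(10√α/δ). For 1 ≤ j ≤ n let 0 < ε_j < 1, set ε_min = min_j ε_j, and suppose λ_min satisfies 0 < λ_min ≤ ε_min ≤ λ_min(1 + 1/L). For each j with ε_j ≠ ε_min suppose λ_j satisfies λ_min ≤ λ_j ≤ ε_j and ε_j − λ_j ≤ λ_min/L. Set c = ⌈(1/λ_min) log(10√α/δ)⌉ and F = 10(n^c + 1)/δ, and suppose p̂' : {0,1}^n → ℝ satisfies p̂'(0^n) = 2^{-n} and |p̂(s) − p̂'(s)| ≤ 1/(2^n F) for every s with 1 ≤ |s| ≤ c. Define q(x) = Σ_{s: |s| ≤ c} (1−λ_min)^{|s|} p̂'(s) (−1)^{s·x}, let r be a probability distribution on {0,1}^n with ||q − r||_1 = 2 Σ_{x: q(x)<0} |q(x)|, set δ_j = (ε_j − ε_min)/(1 − ε_min) for all j, δ_j' = (λ_j − λ_min)/(1 − λ_min) for j with ε_j ≠ ε_min and δ_j' = 0 otherwise, and define p̃_B(x) = Σ_{s∈{0,1}^n}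 [Π_{j=1}^n (1−ε_j)^{s_j}] p̂(s) (−1)^{s·x}. Then ||p̃_B − T^1_{δ_1'} ∘ ⋯ ∘ T^n_{δ_n'} r||_1 ≤ (1 + 1/(1 − λ_min)) δ. -/

import Mathlib

/-- Dot product of two bit strings, `s·x = Σ_j s_j x_j`. -/
def dot {n : ℕ} (s x : Fin n → Bool) : ℕ :=
  (Finset.univ.filter fun j => s j && x j).card

/-- Hamming weight `|s| = Σ_j s_j`. -/
def wt {n : ℕ} (s : Fin n → Bool) : ℕ :=
  (Finset.univ.filter fun j => s j).card

/-- Fourier coefficient `f̂(s) = 2^{-n} Σ_x f(x) (-1)^{s·x}`. -/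
noncomputable def fhat {n : ℕ} (f : (Fin n → Bool) → ℝ) (s : Fin n → Bool) : ℝ :=
  (1 / 2 ^ n) * ∑ x, f x * (-1 : ℝ) ^ dot s x

/-- The single-qubit noise operator `T^j_δ`:
`(T^j_δ f)(x) = (1 - δ/2) f(x) + (δ/2) f(x ⊕ e_j)`. -/
noncomputable def noiseT {n : ℕ} (j : Fin n) (δ : ℝ) (f : (Fin n → Bool) → ℝ) :
    (Fin n → Bool) → ℝ :=
  fun x => (1 - δ / 2) * f x + (δ / 2) * f (Function.update x j (!x j))

/-- The composed noise operator `T^1_{δ_1} ∘ ⋯ ∘ T^n_{δ_n}`. -/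
noncomputable def noiseComp {n : ℕ} (δ : Fin n → ℝ) (f : (Fin n → Bool) → ℝ) :
    (Fin n → Bool) → ℝ :=
  (List.finRange n).foldr (fun j g => noiseT j (δ j) g) f

/-- The `l1` norm `‖f‖₁ = Σ_x |f(x)|`. -/
noncomputable def l1 {n : ℕ} (f : (Fin n → Bool) → ℝ) : ℝ :=
  ∑ x, |f x|








noncomputable def synth {n : ℕ} (g : (Fin n → Bool) → ℝ) : (Fin n → Bool) → ℝ :=
  fun x => ∑ s, g s * (-1 : ℝ) ^ dot s x

lemma dot_comm {n : ℕ} (s x : Fin n → Bool) : dot s x = dot x s := by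
  unfold dot; congr 1; apply Finset.filter_congr; intro j _; rw [Bool.and_comm]

lemma chi_prod {n : ℕ} (s x : Fin n → Bool) :
    ((-1 : ℝ) ^ dot s x) = ∏ j, (-1 : ℝ) ^ ((s j && x j).toNat) := by
  rw [Finset.prod_pow_eq_pow_sum]
  congr 1
  unfold dot
  rw [Finset.card_filter]
  apply Finset.sum_congr rfl
  intro j _; cases (s j && x j) <;> simp

lemma orth {n : ℕ} (s t : Fin n → Bool) :
    ∑ x : Fin n → Bool, (-1 : ℝ) ^ dot s x * (-1 : ℝ) ^ dot t x
      = if s = t then (2 : ℝ) ^ n else 0 := by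
  have key : ∀ x : Fin n → Bool, (-1 : ℝ) ^ dot s x * (-1 : ℝ) ^ dot t x
      = ∏ j, ((-1 : ℝ) ^ ((s j && x j).toNat) * (-1 : ℝ) ^ ((t j && x j).toNat)) := by
    intro x; rw [chi_prod, chi_prod, ← Finset.prod_mul_distrib]
  simp only [key]
  rw [← Fintype.piFinset_univ,
    ← Finset.prod_univ_sum (fun _ : Fin n => (Finset.univ : Finset Bool))
      (fun j b => ((-1:ℝ) ^ ((s j && b).toNat) * (-1:ℝ) ^ ((t j && b).toNat)))]
  have hfac : ∀ j : Fin n, (∑ b : Bool, ((-1 : ℝ) ^ ((s j && b).toNat) * (-1 : ℝ) ^ ((t j && b).toNat)))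
      = if s j = t j then 2 else 0 := by
    intro j
    cases hs : s j <;> cases ht : t j <;> norm_num [Fintype.sum_bool]
  simp only [hfac]
  by_cases h : s = t
  · subst h; simp
  · rw [if_neg h]
    have : ∃ j, ¬ (s j = t j) := by
      by_contra hc; push_neg at hc; exact h (funext hc)
    obtain ⟨j, hj⟩ := this
    exact Finset.prod_eq_zero (Finset.mem_univ j) (if_neg hj)

lemma synth_inner {n : ℕ} (g h : (Fin n → Bool) → ℝ) :
    ∑ x, synth g x * synth h x = 2 ^ n * ∑ s, g s * h s := by
  unfold synth
  simp only [Finset.sum_mul_sum]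
  rw [Finset.sum_comm]
  have : ∀ s : Fin n → Bool, ∑ x : Fin n → Bool, ∑ t : Fin n → Bool,
      g s * (-1:ℝ) ^ dot s x * (h t * (-1:ℝ) ^ dot t x)
      = 2 ^ n * (g s * h s) := by
    intro s
    rw [Finset.sum_comm]
    have : ∀ t : Fin n → Bool, ∑ x : Fin n → Bool,
        g s * (-1:ℝ) ^ dot s x * (h t * (-1:ℝ) ^ dot t x)
        = g s * h t * (if s = t then (2:ℝ)^n else 0) := by
      intro t
      rw [← orth s t, Finset.mul_sum]
      apply Finset.sum_congr rfl; intro x _; ring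
    simp only [this]
    rw [Finset.sum_eq_single s]
    · simp; ring
    · intro t _ ht; rw [if_neg (Ne.symm ht)]; ring
    · intro h; exact absurd (Finset.mem_univ s) h
  simp only [this]
  rw [← Finset.mul_sum]

lemma synth_fhat {n : ℕ} (f : (Fin n → Bool) → ℝ) : synth (fhat f) = f := by
  funext x
  unfold synth fhat
  simp only [Finset.mul_sum, Finset.sum_mul]
  rw [Finset.sum_comm]
  have : ∀ y : Fin n → Bool, ∑ s : Fin n → Bool,
      1 / 2 ^ n * (f y * (-1:ℝ) ^ dot s y) * (-1:ℝ) ^ dot s x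
      = 1 / 2 ^ n * f y * (if y = x then (2:ℝ)^n else 0) := by
    intro y
    rw [← orth y x, Finset.mul_sum]
    apply Finset.sum_congr rfl; intro s _
    rw [dot_comm y s, dot_comm x s]; ring
  simp only [this]
  rw [Finset.sum_eq_single x]
  · rw [if_pos rfl]
    have h2 : (0:ℝ) < 2 ^ n := by positivity
    field_simp
  · intro y _ hy; rw [if_neg hy]; ring
  · intro h; exact absurd (Finset.mem_univ x) h

lemma sum_fhat_sq {n : ℕ} (f : (Fin n → Bool) → ℝ) :
    ∑ s, (fhat f s) ^ 2 = (1 / 2 ^ n) * ∑ x, f x ^ 2 := by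
  have := synth_inner (fhat f) (fhat f)
  rw [synth_fhat] at this
  simp only [← sq] at this
  rw [this]
  have h2 : (0:ℝ) < 2 ^ n := by positivity
  field_simp







lemma l1_nonneg {n : ℕ} (f : (Fin n → Bool) → ℝ) : 0 ≤ l1 f :=
  Finset.sum_nonneg fun x _ => abs_nonneg _

lemma card_bool_fun {n : ℕ} : (Fintype.card (Fin n → Bool) : ℝ) = 2 ^ n := by
  simp [Fintype.card_fun]

lemma l1_synth_le_l2 {n : ℕ} (g : (Fin n → Bool) → ℝ) :
    l1 (synth g) ≤ 2 ^ n * Real.sqrt (∑ s, g s ^ 2) := by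
  have h1 : (l1 (synth g)) ^ 2 ≤ (2:ℝ) ^ n * ∑ x, (synth g x) ^ 2 := by
    have := sq_sum_le_card_mul_sum_sq (s := (Finset.univ : Finset (Fin n → Bool)))
      (f := fun x => |synth g x|)
    simp only [sq_abs] at this
    calc (l1 (synth g))^2 ≤ (Finset.univ.card : ℝ) * ∑ x, (synth g x)^2 := this
      _ = 2 ^ n * ∑ x, (synth g x) ^ 2 := by
          rw [Finset.card_univ, card_bool_fun]
  have h2 : ∑ x, (synth g x) ^ 2 = 2 ^ n * ∑ s, g s ^ 2 := by
    have := synth_inner g g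
    simp only [← sq] at this
    exact this
  rw [h2] at h1
  have h3 : (l1 (synth g)) ^ 2 ≤ ((2:ℝ)^n * Real.sqrt (∑ s, g s ^ 2)) ^ 2 := by
    rw [mul_pow, Real.sq_sqrt (Finset.sum_nonneg fun s _ => sq_nonneg _)]
    calc (l1 (synth g))^2 ≤ (2:ℝ)^n * ((2:ℝ)^n * ∑ s, g s ^2) := h1
      _ = ((2:ℝ)^n)^2 * ∑ s, g s ^2 := by ring
  calc l1 (synth g) = Real.sqrt ((l1 (synth g))^2) := (Real.sqrt_sq (l1_nonneg _)).symm
    _ ≤ Real.sqrt ((2 ^ n * Real.sqrt (∑ s, g s ^ 2))^2) := Real.sqrt_le_sqrt h3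
    _ = 2 ^ n * Real.sqrt (∑ s, g s ^ 2) := Real.sqrt_sq (by positivity)

lemma l1_synth_le_coef {n : ℕ} (g : (Fin n → Bool) → ℝ) :
    l1 (synth g) ≤ 2 ^ n * ∑ s, |g s| := by
  unfold l1 synth
  calc ∑ x, |∑ s, g s * (-1:ℝ) ^ dot s x|
      ≤ ∑ x : Fin n → Bool, ∑ s, |g s * (-1:ℝ) ^ dot s x| :=
        Finset.sum_le_sum fun x _ => Finset.abs_sum_le_sum_abs _ _
    _ = ∑ x : Fin n → Bool, ∑ s, |g s| := by
        apply Finset.sum_congr rfl; intro x _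
        apply Finset.sum_congr rfl; intro s _
        rw [abs_mul, abs_pow, abs_neg, abs_one, one_pow, mul_one]
    _ = 2 ^ n * ∑ s, |g s| := by
        rw [Finset.sum_const, Finset.card_univ, nsmul_eq_mul, card_bool_fun]

lemma chi_update {n : ℕ} (s x : Fin n → Bool) (j : Fin n) :
    ((-1 : ℝ) ^ dot s (Function.update x j (!x j)))
      = (-1 : ℝ) ^ ((s j).toNat) * (-1 : ℝ) ^ dot s x := by
  rw [chi_prod, chi_prod]
  rw [← Finset.mul_prod_erase Finset.univ
    (fun k => (-1:ℝ) ^ ((s k && Function.update x j (!x j) k).toNat)) (Finset.mem_univ j)]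
  rw [← Finset.mul_prod_erase Finset.univ
    (fun k => (-1:ℝ) ^ ((s k && x k).toNat)) (Finset.mem_univ j)]
  have h1 : ∀ k ∈ Finset.univ.erase j,
      (-1:ℝ) ^ ((s k && Function.update x j (!x j) k).toNat)
        = (-1:ℝ) ^ ((s k && x k).toNat) := by
    intro k hk
    rw [Function.update_of_ne (Finset.ne_of_mem_erase hk)]
  rw [Finset.prod_congr rfl h1]
  have h2 : ((-1:ℝ) ^ ((s j && Function.update x j (!x j) j).toNat))
      = (-1:ℝ) ^ ((s j).toNat) * (-1:ℝ) ^ ((s j && x j).toNat) := by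
    rw [Function.update_self]
    cases hs : s j <;> cases hx : x j <;> norm_num
  rw [h2]; ring

lemma noiseT_synth {n : ℕ} (j : Fin n) (d : ℝ) (g : (Fin n → Bool) → ℝ) :
    noiseT j d (synth g) = synth (fun s => (1 - d) ^ ((s j).toNat) * g s) := by
  funext x
  unfold noiseT synth
  simp only [Finset.mul_sum, ← Finset.sum_add_distrib]
  apply Finset.sum_congr rfl
  intro s _
  rw [chi_update]
  cases hs : s j <;> simp <;> ring

lemma noiseT_sub {n : ℕ} (j : Fin n) (d : ℝ) (f g : (Fin n → Bool) → ℝ) :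
    noiseT j d (fun x => f x - g x) = fun x => noiseT j d f x - noiseT j d g x := by
  funext x; unfold noiseT; ring

lemma l1_noiseT_le {n : ℕ} (j : Fin n) (d : ℝ) (hd0 : 0 ≤ d) (hd2 : d ≤ 2)
    (f : (Fin n → Bool) → ℝ) : l1 (noiseT j d f) ≤ l1 f := by
  unfold l1 noiseT
  have hinv : ∀ x : Fin n → Bool,
      Function.update (Function.update x j (!x j)) j (!(Function.update x j (!x j) j)) = x := by
    intro x
    rw [Function.update_self, Function.update_idem, Bool.not_not, Function.update_eq_self]
  have hsum : ∑ x : Fin n → Bool, |f (Function.update x j (!x j))| = ∑ x, |f x| := by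
    apply Finset.sum_nbij' (fun x => Function.update x j (!x j))
      (fun x => Function.update x j (!x j))
    · intro x _; exact Finset.mem_univ _
    · intro x _; exact Finset.mem_univ _
    · intro x _; exact hinv x
    · intro x _; exact hinv x
    · intro x _; rfl
  calc ∑ x, |(1 - d/2) * f x + (d/2) * f (Function.update x j (!x j))|
      ≤ ∑ x : Fin n → Bool, ((1 - d/2) * |f x| + (d/2) * |f (Function.update x j (!x j))|) := by
        apply Finset.sum_le_sum
        intro x _
        calc |(1 - d/2) * f x + (d/2) * f (Function.update x j (!x j))|
            ≤ |(1 - d/2) * f x| + |(d/2) * f (Function.update x j (!x j))| := abs_add_le _ _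
          _ = (1 - d/2) * |f x| + (d/2) * |f (Function.update x j (!x j))| := by
              rw [abs_mul, abs_mul, abs_of_nonneg (by linarith : (0:ℝ) ≤ 1 - d/2),
                abs_of_nonneg (by linarith : (0:ℝ) ≤ d/2)]
    _ = (1 - d/2) * ∑ x, |f x|
          + (d/2) * ∑ x : Fin n → Bool, |f (Function.update x j (!x j))| := by
        rw [Finset.sum_add_distrib, Finset.mul_sum, Finset.mul_sum]
    _ = ∑ x, |f x| := by rw [hsum]; ring

lemma noiseComp_list_synth {n : ℕ} (δ : Fin n → ℝ) (l : List (Fin n))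
    (g : (Fin n → Bool) → ℝ) :
    l.foldr (fun j g => noiseT j (δ j) g) (synth g)
      = synth (fun s => (l.map fun j => (1 - δ j) ^ ((s j).toNat)).prod * g s) := by
  induction l with
  | nil => simp [synth]
  | cons j l ih =>
      simp only [List.foldr_cons, ih, noiseT_synth, List.map_cons, List.prod_cons]
      exact congrArg synth (funext fun s => by ring)

lemma noiseComp_synth {n : ℕ} (δ : Fin n → ℝ) (g : (Fin n → Bool) → ℝ) :
    noiseComp δ (synth g)
      = synth (fun s => (∏ j, (1 - δ j) ^ ((s j).toNat)) * g s) := by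
  unfold noiseComp
  rw [noiseComp_list_synth]
  exact congrArg synth (funext fun s => by rw [Fin.prod_univ_def])

lemma noiseComp_sub {n : ℕ} (δ : Fin n → ℝ) (f g : (Fin n → Bool) → ℝ) :
    noiseComp δ (fun x => f x - g x) = fun x => noiseComp δ f x - noiseComp δ g x := by
  unfold noiseComp
  induction (List.finRange n) with
  | nil => rfl
  | cons j l ih => simp only [List.foldr_cons, ih, noiseT_sub]

lemma l1_noiseComp_le {n : ℕ} (δ : Fin n → ℝ) (hd : ∀ j, 0 ≤ δ j ∧ δ j ≤ 2)
    (f : (Fin n → Bool) → ℝ) : l1 (noiseComp δ f) ≤ l1 f := by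
  unfold noiseComp
  induction (List.finRange n) with
  | nil => exact le_refl _
  | cons j l ih =>
      simp only [List.foldr_cons]
      exact le_trans (l1_noiseT_le j (δ j) (hd j).1 (hd j).2 _) ih

lemma synth_w_fhat_nonneg {n : ℕ} (w : Fin n → ℝ) (hw : ∀ j, |w j| ≤ 1)
    (f : (Fin n → Bool) → ℝ) (hf : ∀ y, 0 ≤ f y) (x : Fin n → Bool) :
    0 ≤ synth (fun s => (∏ j, (w j) ^ ((s j).toNat)) * fhat f s) x := by
  have expand : synth (fun s => (∏ j, (w j) ^ ((s j).toNat)) * fhat f s) x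
      = ∑ y, (1 / 2 ^ n) * f y *
          ∏ j, (1 + w j * ((-1:ℝ) ^ ((y j).toNat) * (-1:ℝ) ^ ((x j).toNat))) := by
    unfold synth fhat
    have step1 : ∀ s : Fin n → Bool,
        (∏ j, (w j) ^ ((s j).toNat)) * ((1 / 2 ^ n) * ∑ y, f y * (-1:ℝ) ^ dot s y)
            * (-1:ℝ) ^ dot s x
        = ∑ y, (1 / 2 ^ n) * f y *
            ∏ j, ((w j) ^ ((s j).toNat) * ((-1:ℝ) ^ ((s j && y j).toNat)
              * (-1:ℝ) ^ ((s j && x j).toNat))) := by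
      intro s
      rw [Finset.mul_sum, Finset.mul_sum, Finset.sum_mul]
      apply Finset.sum_congr rfl
      intro y _
      have : ∏ j, ((w j) ^ ((s j).toNat) * ((-1:ℝ) ^ ((s j && y j).toNat)
              * (-1:ℝ) ^ ((s j && x j).toNat)))
          = (∏ j, (w j) ^ ((s j).toNat)) * ((-1:ℝ) ^ dot s y * (-1:ℝ) ^ dot s x) := by
        rw [Finset.prod_mul_distrib, Finset.prod_mul_distrib, chi_prod s y, chi_prod s x]
      rw [this]; ring
    simp only [step1]
    rw [Finset.sum_comm]
    apply Finset.sum_congr rfl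
    intro y _
    rw [← Finset.mul_sum]
    congr 1
    rw [← Fintype.piFinset_univ,
      ← Finset.prod_univ_sum (fun _ : Fin n => (Finset.univ : Finset Bool))
        (fun j b => (w j) ^ (b.toNat) * ((-1:ℝ) ^ ((b && y j).toNat)
          * (-1:ℝ) ^ ((b && x j).toNat)))]
    apply Finset.prod_congr rfl
    intro j _
    rw [Fintype.sum_bool]
    cases hy : y j <;> cases hx : x j <;> norm_num <;> ring
  rw [expand]
  apply Finset.sum_nonneg
  intro y _
  apply mul_nonneg (mul_nonneg (by positivity) (hf y))
  apply Finset.prod_nonneg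
  intro j _
  have he : |(-1:ℝ) ^ ((y j).toNat) * (-1:ℝ) ^ ((x j).toNat)| = 1 := by
    cases y j <;> cases x j <;> norm_num
  have : |w j * ((-1:ℝ) ^ ((y j).toNat) * (-1:ℝ) ^ ((x j).toNat))| ≤ 1 := by
    rw [abs_mul, he, mul_one]; exact hw j
  have := neg_abs_le (w j * ((-1:ℝ) ^ ((y j).toNat) * (-1:ℝ) ^ ((x j).toNat)))
  linarith [abs_nonneg (w j * ((-1:ℝ) ^ ((y j).toNat) * (-1:ℝ) ^ ((x j).toNat)))]

lemma geomSum_le' {x : ℝ} (h0 : 0 ≤ x) (h1 : x < 1) (m : ℕ) :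
    ∑ i ∈ Finset.range m, x ^ i ≤ 1 / (1 - x) := by
  have hne : x ≠ 1 := ne_of_lt h1
  have hpos : (0:ℝ) < 1 - x := by linarith
  rw [geom_sum_eq hne]
  have key : (x ^ m - 1) / (x - 1) = (1 - x ^ m) / (1 - x) := by
    rw [div_eq_div_iff (by intro h; apply hne; linarith) hpos.ne']
    ring
  rw [key]
  have hxm : 0 ≤ x ^ m := pow_nonneg h0 m
  gcongr
  linarith

lemma kpow_le {x : ℝ} (h0 : 0 ≤ x) (h1 : x < 1) (k : ℕ) :
    (k : ℝ) * x ^ (k - 1) ≤ 1 / (1 - x) := by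
  rcases Nat.eq_zero_or_pos k with hk | hk
  · subst hk
    have hpos : (0:ℝ) < 1 - x := by linarith
    simp only [Nat.cast_zero, zero_mul]
    exact div_nonneg zero_le_one hpos.le
  calc (k : ℝ) * x ^ (k - 1) = ∑ _i ∈ Finset.range k, x ^ (k - 1) := by
        rw [Finset.sum_const, Finset.card_range, nsmul_eq_mul]
    _ ≤ ∑ i ∈ Finset.range k, x ^ i := by
        apply Finset.sum_le_sum
        intro i hi
        have := Finset.mem_range.mp hi
        apply pow_le_pow_of_le_one h0 (le_of_lt h1)
        omega
    _ ≤ 1 / (1 - x) := geomSum_le' h0 h1 k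

lemma prod_sub_prod_bound {ι : Type*} [DecidableEq ι] (S : Finset ι) (a b : ι → ℝ) (M : ℝ)
    (hM0 : 0 ≤ M) (hM1 : M ≤ 1)
    (hab : ∀ j ∈ S, 0 ≤ b j ∧ b j ≤ a j ∧ a j ≤ M) :
    0 ≤ (∏ j ∈ S, a j) - ∏ j ∈ S, b j ∧
      (∏ j ∈ S, a j) - ∏ j ∈ S, b j ≤ (∑ j ∈ S, (a j - b j)) * M ^ (S.card - 1) := by
  induction S using Finset.cons_induction with
  | empty => simp
  | cons i S hi ih =>
      have hmem : ∀ j ∈ S, 0 ≤ b j ∧ b j ≤ a j ∧ a j ≤ M := by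
        intro j hj; exact hab j (Finset.mem_cons.2 (Or.inr hj))
      obtain ⟨ih1, ih2⟩ := ih hmem
      have hai := hab i (Finset.mem_cons_self i S)
      have hbS : 0 ≤ ∏ j ∈ S, b j := Finset.prod_nonneg fun j hj => (hmem j hj).1
      have haS : 0 ≤ ∏ j ∈ S, a j := Finset.prod_nonneg fun j hj =>
        le_trans (hmem j hj).1 (le_trans (hmem j hj).2.1 (le_refl _))
      have haSM : ∏ j ∈ S, a j ≤ M ^ S.card := by
        calc ∏ j ∈ S, a j ≤ ∏ _j ∈ S, M := by
              apply Finset.prod_le_prod (fun j hj => le_trans (hmem j hj).1 (hmem j hj).2.1)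
                (fun j hj => (hmem j hj).2.2)
          _ = M ^ S.card := by rw [Finset.prod_const]
      rw [Finset.prod_cons, Finset.prod_cons, Finset.sum_cons]
      constructor
      · nlinarith [hai.1, hai.2.1, hai.2.2]
      · have key : a i * ∏ j ∈ S, a j - b i * ∏ j ∈ S, b j
            = (a i - b i) * ∏ j ∈ S, a j + b i * ((∏ j ∈ S, a j) - ∏ j ∈ S, b j) := by ring
        rw [key]
        have hcard : (Finset.cons i S hi).card - 1 = S.card := by
          rw [Finset.card_cons]; omega
        rw [hcard]
        have t1 : (a i - b i) * ∏ j ∈ S, a j ≤ (a i - b i) * M ^ S.card := by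
          apply mul_le_mul_of_nonneg_left haSM (by linarith [hai.2.1])
        have t2 : b i * ((∏ j ∈ S, a j) - ∏ j ∈ S, b j)
            ≤ (∑ j ∈ S, (a j - b j)) * M ^ S.card := by
          rcases Nat.eq_zero_or_pos S.card with hc | hc
          · have hS : S = ∅ := Finset.card_eq_zero.mp hc
            subst hS; simp
          · have hsum : 0 ≤ ∑ j ∈ S, (a j - b j) :=
              Finset.sum_nonneg fun j hj => by linarith [(hmem j hj).2.1]
            have hbiM : b i ≤ M := le_trans hai.2.1 hai.2.2
            calc b i * ((∏ j ∈ S, a j) - ∏ j ∈ S, b j)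
                ≤ M * ((∑ j ∈ S, (a j - b j)) * M ^ (S.card - 1)) :=
                  mul_le_mul hbiM ih2 ih1 hM0
              _ = (∑ j ∈ S, (a j - b j)) * (M ^ (S.card - 1) * M) := by ring
              _ = (∑ j ∈ S, (a j - b j)) * M ^ S.card := by
                  rw [← pow_succ]
                  congr 2
                  omega
        rw [add_mul]
        exact add_le_add t1 t2

lemma card_wt_le {n k : ℕ} :
    (Finset.univ.filter fun s : Fin n → Bool => wt s = k).card ≤ n.choose k := by
  have h := Finset.card_le_card_of_injOn
    (f := fun s : Fin n → Bool => Finset.univ.filter fun j => s j)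
    (s := Finset.univ.filter fun s : Fin n → Bool => wt s = k)
    (t := Finset.powersetCard k Finset.univ) ?_ ?_
  · calc (Finset.univ.filter fun s : Fin n → Bool => wt s = k).card
        ≤ (Finset.powersetCard k (Finset.univ : Finset (Fin n))).card := h
      _ = n.choose k := by rw [Finset.card_powersetCard, Finset.card_univ, Fintype.card_fin]
  · intro s hs
    rw [Finset.mem_coe, Finset.mem_powersetCard]
    exact ⟨Finset.filter_subset _ _, (Finset.mem_filter.mp (Finset.mem_coe.mp hs)).2⟩
  · intro s _ t _ hst
    funext j
    have hs : s j = true ↔ j ∈ Finset.univ.filter fun i => s i := by simp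
    have ht : t j = true ↔ j ∈ Finset.univ.filter fun i => t i := by simp
    simp only [hst] at hs
    cases hsj : s j
    · cases htj : t j
      · rfl
      · exact absurd (hs.mpr (ht.mp htj)) (by simp [hsj])
    · rw [ht.mpr (hs.mp hsj)]

lemma sum_choose_le {n c : ℕ} (hn : 2 ≤ n) :
    ∑ k ∈ Finset.Icc 1 c, n.choose k ≤ 2 * n ^ c := by
  induction c with
  | zero => simp
  | succ c ih =>
      rw [Finset.sum_Icc_succ_top (by omega : 1 ≤ c + 1)]
      have h1 : n.choose (c+1) ≤ n ^ (c+1) := Nat.choose_le_pow n (c+1)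
      have h2 : 2 * n ^ c ≤ n ^ (c + 1) := by
        rw [pow_succ]
        calc 2 * n ^ c = n ^ c * 2 := by ring
          _ ≤ n ^ c * n := Nat.mul_le_mul_left _ hn
      omega

lemma card_N_le {n c : ℕ} :
    (Finset.univ.filter fun s : Fin n → Bool => 1 ≤ wt s ∧ wt s ≤ c).card
      ≤ 2 * n ^ c + 2 := by
  rcases le_or_gt n 1 with hn | hn
  · calc (Finset.univ.filter fun s : Fin n → Bool => 1 ≤ wt s ∧ wt s ≤ c).card
        ≤ (Finset.univ : Finset (Fin n → Bool)).card := Finset.card_filter_le _ _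
      _ = 2 ^ n := by rw [Finset.card_univ]; simp [Fintype.card_fun]
      _ ≤ 2 ^ 1 := Nat.pow_le_pow_right (by omega) hn
      _ ≤ 2 * n ^ c + 2 := by omega
  · have hn2 : 2 ≤ n := hn
    have hfib := Finset.card_eq_sum_card_fiberwise
      (s := Finset.univ.filter fun s : Fin n → Bool => 1 ≤ wt s ∧ wt s ≤ c)
      (t := Finset.Icc 1 c) (f := wt)
      (by intro s hs
          have := (Finset.mem_filter.mp hs).2
          exact Finset.mem_Icc.mpr ⟨this.1, this.2⟩)
    rw [hfib]
    calc ∑ k ∈ Finset.Icc 1 c,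
          ((Finset.univ.filter fun s : Fin n → Bool => 1 ≤ wt s ∧ wt s ≤ c).filter
            fun s => wt s = k).card
        ≤ ∑ k ∈ Finset.Icc 1 c, (Finset.univ.filter fun s : Fin n → Bool => wt s = k).card := by
          apply Finset.sum_le_sum
          intro k _
          apply Finset.card_le_card
          intro s hs
          rw [Finset.mem_filter] at hs ⊢
          exact ⟨Finset.mem_univ _, hs.2⟩
      _ ≤ ∑ k ∈ Finset.Icc 1 c, n.choose k :=
          Finset.sum_le_sum fun k _ => card_wt_le
      _ ≤ 2 * n ^ c := sum_choose_le hn2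
      _ ≤ 2 * n ^ c + 2 := by omega

lemma synth_sub {n : ℕ} (g h : (Fin n → Bool) → ℝ) (x : Fin n → Bool) :
    synth (fun s => g s - h s) x = synth g x - synth h x := by
  unfold synth
  rw [← Finset.sum_sub_distrib]
  apply Finset.sum_congr rfl
  intro s _; ring

lemma synth_add {n : ℕ} (g h : (Fin n → Bool) → ℝ) (x : Fin n → Bool) :
    synth (fun s => g s + h s) x = synth g x + synth h x := by
  unfold synth
  rw [← Finset.sum_add_distrib]
  apply Finset.sum_congr rfl
  intro s _; ring

lemma wt_eq_sum {n : ℕ} (s : Fin n → Bool) : wt s = ∑ j, (s j).toNat := by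
  unfold wt
  rw [Finset.card_filter]
  apply Finset.sum_congr rfl
  intro j _; cases s j <;> simp

lemma pow_wt_eq_prod {n : ℕ} (a : ℝ) (s : Fin n → Bool) :
    a ^ wt s = ∏ j, a ^ ((s j).toNat) := by
  rw [Finset.prod_pow_eq_pow_sum, wt_eq_sum]

lemma prod_toNat_eq_prod_filter {n : ℕ} (v : Fin n → ℝ) (s : Fin n → Bool) :
    (∏ j, (v j) ^ ((s j).toNat)) = ∏ j ∈ Finset.univ.filter (fun j => s j), v j := by
  rw [Finset.prod_filter]
  apply Finset.prod_congr rfl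
  intro j _; cases s j <;> simp

lemma dot_zero {n : ℕ} (x : Fin n → Bool) : dot (fun _ => false) x = 0 := by
  unfold dot; simp

lemma wt_zero_iff {n : ℕ} (s : Fin n → Bool) : wt s = 0 ↔ s = fun _ => false := by
  unfold wt
  constructor
  · intro h
    funext j
    by_contra hj
    have hj' : s j = true := by revert hj; cases s j <;> simp
    have : j ∈ Finset.univ.filter (fun j => s j) := by simp [hj']
    rw [Finset.card_eq_zero.mp h] at this
    exact absurd this (Finset.notMem_empty j)
  · intro h; subst h; simp

lemma fhat_zero_of_sum_one {n : ℕ} (p : (Fin n → Bool) → ℝ) (hp : ∑ x, p x = 1) :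
    fhat p (fun _ => false) = 1 / 2 ^ n := by
  unfold fhat
  simp only [dot_zero, pow_zero, mul_one, hp, mul_one]

lemma l1_triangle3 {n : ℕ} (f g h k : (Fin n → Bool) → ℝ) :
    l1 (fun x => f x - k x)
      ≤ l1 (fun x => f x - g x) + l1 (fun x => g x - h x) + l1 (fun x => h x - k x) := by
  unfold l1
  rw [← Finset.sum_add_distrib, ← Finset.sum_add_distrib]
  apply Finset.sum_le_sum
  intro x _
  calc |f x - k x| = |(f x - g x) + (g x - h x) + (h x - k x)| := by ring_nf
    _ ≤ |(f x - g x) + (g x - h x)| + |h x - k x| := abs_add_le _ _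
    _ ≤ |f x - g x| + |g x - h x| + |h x - k x| := by
        have := abs_add_le (f x - g x) (g x - h x); linarith

lemma tail_bound {lammin K : ℝ} (hl0 : 0 < lammin) (hl1 : lammin < 1) (hK : 10 ≤ K) (c : ℕ)
    (hcc : (1 / lammin) * Real.logb 2 K ≤ (c : ℝ)) : (1 - lammin) ^ c ≤ 1 / K := by
  have hK0 : (0:ℝ) < K := by linarith
  have hlogK0 : 0 ≤ Real.log K := Real.log_nonneg (by linarith)
  have hlog2 : Real.log 2 < 1 := by
    have := Real.log_two_lt_d9; linarith
  have hlog2pos : 0 < Real.log 2 := Real.log_pos (by norm_num)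
  have hloglogb : Real.log K ≤ Real.logb 2 K := by
    rw [Real.logb, le_div_iff₀ hlog2pos]
    nlinarith
  have hcl : Real.log K ≤ (c : ℝ) * lammin := by
    have h1 : Real.logb 2 K ≤ (c : ℝ) * lammin := by
      rw [one_div, inv_mul_le_iff₀ hl0] at hcc
      linarith [hcc]
    linarith
  calc (1 - lammin) ^ c ≤ (Real.exp (-lammin)) ^ c := by
        apply pow_le_pow_left₀ (by linarith)
        have := Real.add_one_le_exp (-lammin); linarith
    _ = Real.exp ((c : ℝ) * (-lammin)) := (Real.exp_nat_mul _ c).symm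
    _ ≤ Real.exp (- Real.log K) := by
        apply Real.exp_le_exp.mpr; linarith
    _ = 1 / K := by rw [Real.exp_neg, Real.exp_log hK0, one_div]

set_option maxHeartbeats 2000000 in
theorem stmt14 {n : ℕ} (p phat' q r : (Fin n → Bool) → ℝ) (α δ lammin εmin L : ℝ)
    (ε lam : Fin n → ℝ)
    (hp0 : ∀ x, 0 ≤ p x) (hp1 : ∑ x, p x = 1)
    (hα : 1 ≤ α) (hp2 : ∑ x, p x ^ 2 ≤ α / 2 ^ n)
    (hδ0 : 0 < δ) (hδ1 : δ < 1)
    (hL : L = (10 * Real.sqrt α / δ) * Real.logb 2 (10 * Real.sqrt α / δ))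
    (hε : ∀ j, 0 < ε j ∧ ε j < 1)
    (hεmin_le : ∀ j, εmin ≤ ε j) (hεmin_mem : ∃ j, ε j = εmin)
    (hlammin0 : 0 < lammin) (hlammin1 : lammin ≤ εmin)
    (hlammin2 : εmin ≤ lammin * (1 + 1 / L))
    (hlam : ∀ j, ε j ≠ εmin →
      lammin ≤ lam j ∧ lam j ≤ ε j ∧ ε j - lam j ≤ lammin / L)
    (c : ℕ) (hc : c = ⌈(1 / lammin) * Real.logb 2 (10 * Real.sqrt α / δ)⌉₊)
    (F : ℝ) (hF : F = 10 * ((n : ℝ) ^ c + 1) / δ)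
    (h0 : phat' (fun _ => false) = 1 / 2 ^ n)
    (happrox : ∀ s, 1 ≤ wt s → wt s ≤ c → |fhat p s - phat' s| ≤ 1 / (2 ^ n * F))
    (hq : ∀ x, q x = ∑ s ∈ Finset.univ.filter (fun s : Fin n → Bool => wt s ≤ c),
        (1 - lammin) ^ wt s * phat' s * (-1 : ℝ) ^ dot s x)
    (hr0 : ∀ x, 0 ≤ r x) (hr1 : ∑ x, r x = 1)
    (hqr : l1 (fun x => q x - r x)
      = 2 * ∑ x ∈ Finset.univ.filter (fun x : Fin n → Bool => q x < 0), |q x|)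
    (δ₁ δ₂ : Fin n → ℝ)
    (hδ₁ : ∀ j, δ₁ j = (ε j - εmin) / (1 - εmin))
    (hδ₂ : ∀ j, δ₂ j
      = if ε j = εmin then 0 else (lam j - lammin) / (1 - lammin))
    (ptB : (Fin n → Bool) → ℝ)
    (hB : ∀ x, ptB x
      = ∑ s, (∏ j, (1 - ε j) ^ (s j).toNat) * fhat p s * (-1 : ℝ) ^ dot s x) :
    l1 (fun x => ptB x - noiseComp δ₂ r x) ≤ (1 + 1 / (1 - lammin)) * δ := by
  -- ## basic numeric facts
  obtain ⟨j₀, hj₀⟩ := hεmin_mem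
  have hεmin1 : εmin < 1 := hj₀ ▸ (hε j₀).2
  have hεmin0 : 0 < εmin := hj₀ ▸ (hε j₀).1
  have hlam_lt1 : lammin < 1 := lt_of_le_of_lt hlammin1 hεmin1
  have hM0 : (0:ℝ) < 1 - lammin := by linarith
  have hM1 : 1 - lammin ≤ 1 := by linarith
  have hsqα0 : 0 < Real.sqrt α := Real.sqrt_pos.mpr (by linarith)
  have hsqα : 1 ≤ Real.sqrt α := by
    rw [show (1:ℝ) = Real.sqrt 1 by simp]
    exact Real.sqrt_le_sqrt hα
  set K := 10 * Real.sqrt α / δ with hKdef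
  have hK10 : 10 ≤ K := by
    rw [hKdef, le_div_iff₀ hδ0]; nlinarith
  have hK0 : (0:ℝ) < K := by linarith
  have hlogK : 1 ≤ Real.logb 2 K := by
    have h2 : Real.logb 2 2 ≤ Real.logb 2 K :=
      Real.logb_le_logb_of_le (by norm_num) (by norm_num) (by linarith)
    rwa [Real.logb_self_eq_one (by norm_num)] at h2
  have hLK : K ≤ L := by
    rw [hL]; nlinarith
  have hLpos : 0 < L := by linarith
  have hsqαK : Real.sqrt α / K = δ / 10 := by
    rw [hKdef]; field_simp
  have hc1 : 1 ≤ c := by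
    rw [hc]
    rw [Nat.one_le_ceil_iff]
    have h1 : 0 < Real.logb 2 K := by linarith
    positivity
  have hcceil : (1 / lammin) * Real.logb 2 K ≤ (c : ℝ) := by
    rw [hc]; exact Nat.le_ceil _
  have htail : (1 - lammin) ^ c ≤ 1 / K := tail_bound hlammin0 hlam_lt1 hK10 c hcceil
  have hF0 : 0 < F := by rw [hF]; positivity
  have hnc0 : (0:ℝ) < (n:ℝ) ^ c + 1 := by positivity
  -- ## the effective lambda'
  set lam' : Fin n → ℝ := fun j => if ε j = εmin then lammin else lam j with hlam'def
  have hlam'p : ∀ j, lammin ≤ lam' j ∧ lam' j ≤ ε j ∧ ε j - lam' j ≤ lammin / L := by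
    intro j
    by_cases hje : ε j = εmin
    · simp only [hlam'def, if_pos hje]
      refine ⟨le_refl _, hje ▸ hlammin1, ?_⟩
      rw [hje]
      have : lammin * (1 + 1 / L) = lammin + lammin / L := by ring
      linarith [hlammin2.trans_eq this]
    · simp only [hlam'def, if_neg hje]
      exact hlam j hje
  have hδ₂b : ∀ j, 0 ≤ δ₂ j ∧ δ₂ j ≤ 2 := by
    intro j
    rw [hδ₂ j]
    by_cases hje : ε j = εmin
    · simp [hje]
    · rw [if_neg hje]
      have h1 := (hlam j hje).1
      have h2 := (hlam j hje).2.1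
      have h3 := (hε j).2
      constructor
      · apply div_nonneg (by linarith) hM0.le
      · rw [div_le_iff₀ hM0]; linarith
  have hfac : ∀ j, (1 - δ₂ j) * (1 - lammin) = 1 - lam' j := by
    intro j
    rw [hδ₂ j]
    by_cases hje : ε j = εmin
    · simp [hlam'def, hje]
    · rw [if_neg hje]
      simp only [hlam'def, if_neg hje]
      field_simp
      ring
  -- ## coefficient functions
  set gl : (Fin n → Bool) → ℝ := fun s => (1 - lammin) ^ wt s * fhat p s with hgl
  set pl : (Fin n → Bool) → ℝ := synth gl with hpl
  set gq : (Fin n → Bool) → ℝ :=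
    fun s => if wt s ≤ c then (1 - lammin) ^ wt s * phat' s else 0 with hgq
  have hq' : q = synth gq := by
    funext x
    rw [hq x, Finset.sum_filter]
    show _ = ∑ s, gq s * (-1:ℝ) ^ dot s x
    apply Finset.sum_congr rfl
    intro s _
    simp only [hgq]
    by_cases hs : wt s ≤ c
    · rw [if_pos hs, if_pos hs]
    · rw [if_neg hs, if_neg hs, zero_mul]
  have hpl0 : ∀ x, 0 ≤ pl x := by
    intro x
    have hgl_eq : gl = fun s => (∏ j, ((fun _ : Fin n => (1 - lammin)) j) ^ ((s j).toNat))
        * fhat p s := by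
      funext s
      simp only [hgl]
      rw [pow_wt_eq_prod]
    rw [hpl, hgl_eq]
    apply synth_w_fhat_nonneg _ _ _ hp0
    intro j
    rw [abs_of_nonneg (by linarith : (0:ℝ) ≤ 1 - lammin)]
    linarith
  have hPar : ∑ s, (fhat p s) ^ 2 ≤ α / 4 ^ n := by
    rw [sum_fhat_sq]
    have h4 : (4:ℝ) ^ n = 2 ^ n * 2 ^ n := by
      rw [show (4:ℝ) = 2 * 2 by norm_num, mul_pow]
    calc (1 / 2 ^ n) * ∑ x, p x ^ 2 ≤ (1 / 2 ^ n) * (α / 2 ^ n) := by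
          apply mul_le_mul_of_nonneg_left hp2 (by positivity)
      _ = α / 4 ^ n := by rw [h4]; field_simp
  -- ## Term 1
  have hptB : ptB = synth (fun s => (∏ j, (1 - ε j) ^ (s j).toNat) * fhat p s) := by
    funext x; rw [hB x]; rfl
  have hTpl : noiseComp δ₂ pl
      = synth (fun s => (∏ j, (1 - lam' j) ^ (s j).toNat) * fhat p s) := by
    rw [hpl, noiseComp_synth]
    apply congrArg synth
    funext s
    simp only [hgl]
    rw [pow_wt_eq_prod (1 - lammin) s, ← mul_assoc, ← Finset.prod_mul_distrib]
    congr 1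
    apply Finset.prod_congr rfl
    intro j _
    rw [← mul_pow, hfac j]
  have hT1 : l1 (fun x => ptB x - noiseComp δ₂ pl x) ≤ δ / 10 := by
    have hdiff : (fun x => ptB x - noiseComp δ₂ pl x)
        = synth (fun s => (∏ j, (1 - ε j) ^ (s j).toNat) * fhat p s
            - (∏ j, (1 - lam' j) ^ (s j).toNat) * fhat p s) := by
      funext x
      rw [hptB, hTpl, synth_sub]
    rw [hdiff]
    have hds : ∀ s : Fin n → Bool,
        |(∏ j, (1 - ε j) ^ (s j).toNat) * fhat p s
          - (∏ j, (1 - lam' j) ^ (s j).toNat) * fhat p s|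
        ≤ (1 / L) * |fhat p s| := by
      intro s
      rw [← sub_mul, abs_mul]
      apply mul_le_mul_of_nonneg_right _ (abs_nonneg _)
      have hb := prod_toNat_eq_prod_filter (fun j => 1 - ε j) s
      have ha := prod_toNat_eq_prod_filter (fun j => 1 - lam' j) s
      rw [hb, ha]
      set S := Finset.univ.filter (fun j => s j = true) with hS
      have hbound := prod_sub_prod_bound S (fun j => 1 - lam' j) (fun j => 1 - ε j)
        (1 - lammin) hM0.le hM1 ?_
      swap
      · intro j _
        have h1 := (hlam'p j).1
        have h2 := (hlam'p j).2.1
        have h3 := (hε j).2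
        exact ⟨by linarith, by linarith, by linarith⟩
      obtain ⟨hge, hle⟩ := hbound
      rw [abs_of_nonpos (by linarith)]
      have hsum : (∑ j ∈ S, ((1 - lam' j) - (1 - ε j))) ≤ (S.card : ℝ) * (lammin / L) := by
        calc ∑ j ∈ S, ((1 - lam' j) - (1 - ε j)) ≤ ∑ _j ∈ S, lammin / L := by
              apply Finset.sum_le_sum
              intro j _
              have := (hlam'p j).2.2
              linarith
          _ = (S.card : ℝ) * (lammin / L) := by
              rw [Finset.sum_const, nsmul_eq_mul]
      have hkpow : (S.card : ℝ) * (1 - lammin) ^ (S.card - 1) ≤ 1 / lammin := by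
        have h := kpow_le hM0.le (by linarith : 1 - lammin < 1) S.card
        rw [sub_sub_cancel] at h
        exact h
      have hMpow : (0:ℝ) ≤ (1 - lammin) ^ (S.card - 1) := by positivity
      have hsum0 : 0 ≤ (∑ j ∈ S, ((1 - lam' j) - (1 - ε j))) :=
        Finset.sum_nonneg fun j _ => by linarith [(hlam'p j).2.1]
      calc -((∏ j ∈ S, (1 - ε j)) - ∏ j ∈ S, (1 - lam' j))
          = (∏ j ∈ S, (1 - lam' j)) - ∏ j ∈ S, (1 - ε j) := by ring
        _ ≤ (∑ j ∈ S, ((1 - lam' j) - (1 - ε j))) * (1 - lammin) ^ (S.card - 1) := hle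
        _ ≤ ((S.card : ℝ) * (lammin / L)) * (1 - lammin) ^ (S.card - 1) := by
            apply mul_le_mul_of_nonneg_right hsum hMpow
        _ = (lammin / L) * ((S.card : ℝ) * (1 - lammin) ^ (S.card - 1)) := by ring
        _ ≤ (lammin / L) * (1 / lammin) := by
            apply mul_le_mul_of_nonneg_left hkpow (by positivity)
        _ = 1 / L := by field_simp
    have hsumsq : ∑ s, ((∏ j, (1 - ε j) ^ (s j).toNat) * fhat p s
          - (∏ j, (1 - lam' j) ^ (s j).toNat) * fhat p s) ^ 2
        ≤ (1 / L) ^ 2 * (α / 4 ^ n) := by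
      calc ∑ s, ((∏ j, (1 - ε j) ^ (s j).toNat) * fhat p s
            - (∏ j, (1 - lam' j) ^ (s j).toNat) * fhat p s) ^ 2
          ≤ ∑ s, (1 / L) ^ 2 * (fhat p s) ^ 2 := by
            apply Finset.sum_le_sum
            intro s _
            have h1 := hds s
            have h2 : |(∏ j, (1 - ε j) ^ (s j).toNat) * fhat p s
                - (∏ j, (1 - lam' j) ^ (s j).toNat) * fhat p s| ^ 2
                ≤ ((1 / L) * |fhat p s|) ^ 2 := by
              apply pow_le_pow_left₀ (abs_nonneg _) h1
            rw [sq_abs] at h2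
            calc ((∏ j, (1 - ε j) ^ (s j).toNat) * fhat p s
                - (∏ j, (1 - lam' j) ^ (s j).toNat) * fhat p s) ^ 2
                ≤ ((1 / L) * |fhat p s|) ^ 2 := h2
              _ = (1 / L) ^ 2 * (fhat p s) ^ 2 := by
                  rw [mul_pow, sq_abs]
        _ = (1 / L) ^ 2 * ∑ s, (fhat p s) ^ 2 := by rw [← Finset.mul_sum]
        _ ≤ (1 / L) ^ 2 * (α / 4 ^ n) := by
            apply mul_le_mul_of_nonneg_left hPar (by positivity)
    calc l1 (synth (fun s => (∏ j, (1 - ε j) ^ (s j).toNat) * fhat p s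
            - (∏ j, (1 - lam' j) ^ (s j).toNat) * fhat p s))
        ≤ 2 ^ n * Real.sqrt (∑ s, ((∏ j, (1 - ε j) ^ (s j).toNat) * fhat p s
            - (∏ j, (1 - lam' j) ^ (s j).toNat) * fhat p s) ^ 2) := l1_synth_le_l2 _
      _ ≤ 2 ^ n * Real.sqrt ((1 / L) ^ 2 * (α / 4 ^ n)) := by
          apply mul_le_mul_of_nonneg_left (Real.sqrt_le_sqrt hsumsq) (by positivity)
      _ = Real.sqrt α / L := by
          have h4 : ((2:ℝ) ^ n) ^ 2 = 4 ^ n := by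
            rw [← pow_mul, show (4:ℝ) = 2 ^ 2 by norm_num, ← pow_mul, mul_comm]
          have hkey : (1 / L) ^ 2 * (α / 4 ^ n) = (Real.sqrt α / (L * 2 ^ n)) ^ 2 := by
            rw [div_pow, div_pow, Real.sq_sqrt (by linarith : (0:ℝ) ≤ α), mul_pow, h4]
            field_simp
          rw [hkey, Real.sqrt_sq (by positivity)]
          field_simp
      _ ≤ Real.sqrt α / K := by
          apply div_le_div_of_nonneg_left hsqα0.le hK0 hLK
      _ = δ / 10 := hsqαK
  -- ## Term 2
  set glow : (Fin n → Bool) → ℝ :=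
    fun s => if wt s ≤ c then (1 - lammin) ^ wt s * (fhat p s - phat' s) else 0 with hglow
  set ghigh : (Fin n → Bool) → ℝ :=
    fun s => if wt s ≤ c then 0 else gl s with hghigh
  have hT2 : l1 (fun x => pl x - q x) ≤ 3 * δ / 10 := by
    have hsplit : (fun x => pl x - q x) = fun x => synth glow x + synth ghigh x := by
      funext x
      rw [hpl, hq', ← synth_add]
      have : (fun s => glow s + ghigh s) = fun s => gl s - gq s := by
        funext s
        simp only [hglow, hghigh, hgl, hgq]
        by_cases hs : wt s ≤ c
        · rw [if_pos hs, if_pos hs, if_pos hs]; ring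
        · rw [if_neg hs, if_neg hs, if_neg hs]; ring
      rw [this, synth_sub]
    rw [hsplit]
    have hlow : l1 (synth glow) ≤ δ / 5 := by
      have hN := card_N_le (n := n) (c := c)
      have hNr : ((Finset.univ.filter
            fun s : Fin n → Bool => 1 ≤ wt s ∧ wt s ≤ c).card : ℝ)
          ≤ 2 * (n:ℝ) ^ c + 2 := by
        calc ((Finset.univ.filter fun s : Fin n → Bool => 1 ≤ wt s ∧ wt s ≤ c).card : ℝ)
            ≤ ((2 * n ^ c + 2 : ℕ) : ℝ) := by exact_mod_cast hN
          _ = 2 * (n:ℝ) ^ c + 2 := by push_cast; ring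
      calc l1 (synth glow) ≤ 2 ^ n * ∑ s, |glow s| := l1_synth_le_coef glow
        _ ≤ 2 ^ n * ∑ s : Fin n → Bool,
              (if 1 ≤ wt s ∧ wt s ≤ c then 1 / (2 ^ n * F) else 0) := by
            apply mul_le_mul_of_nonneg_left _ (by positivity)
            apply Finset.sum_le_sum
            intro s _
            simp only [hglow]
            by_cases hs : wt s ≤ c
            · rw [if_pos hs]
              by_cases hs1 : 1 ≤ wt s
              · rw [if_pos ⟨hs1, hs⟩, abs_mul]
                have h1 : |(1 - lammin) ^ wt s| ≤ 1 := by
                  rw [abs_of_nonneg (by positivity)]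
                  exact pow_le_one₀ hM0.le (by linarith)
                have h2 := happrox s hs1 hs
                calc |(1 - lammin) ^ wt s| * |fhat p s - phat' s|
                    ≤ 1 * (1 / (2 ^ n * F)) := by
                      apply mul_le_mul h1 h2 (abs_nonneg _) zero_le_one
                  _ = 1 / (2 ^ n * F) := one_mul _
              · rw [if_neg (by tauto)]
                have hs0 : wt s = 0 := by omega
                have hseq : s = fun _ => false := (wt_zero_iff s).mp hs0
                have : fhat p s - phat' s = 0 := by
                  rw [hseq, fhat_zero_of_sum_one p hp1, h0]; ring
                rw [this, mul_zero, abs_zero]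
            · rw [if_neg hs, if_neg (by tauto), abs_zero]
        _ = 2 ^ n * (((Finset.univ.filter
              fun s : Fin n → Bool => 1 ≤ wt s ∧ wt s ≤ c).card : ℝ) * (1 / (2 ^ n * F))) := by
            congr 1
            rw [← Finset.sum_filter, Finset.sum_const, nsmul_eq_mul]
        _ ≤ 2 ^ n * ((2 * (n:ℝ) ^ c + 2) * (1 / (2 ^ n * F))) := by
            apply mul_le_mul_of_nonneg_left _ (by positivity)
            apply mul_le_mul_of_nonneg_right hNr (by positivity)
        _ = (2 * (n:ℝ) ^ c + 2) / F := by
            field_simp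
        _ ≤ δ / 5 := by
            rw [div_le_iff₀ hF0]
            have hFval : δ / 5 * F = 2 * ((n:ℝ) ^ c + 1) := by
              rw [hF]
              field_simp
              ring
            rw [hFval]
            linarith
    have hhigh : l1 (synth ghigh) ≤ δ / 10 := by
      have hsq : ∑ s, ghigh s ^ 2 ≤ ((1 - lammin) ^ c) ^ 2 * (α / 4 ^ n) := by
        calc ∑ s, ghigh s ^ 2 ≤ ∑ s, ((1 - lammin) ^ c) ^ 2 * (fhat p s) ^ 2 := by
              apply Finset.sum_le_sum
              intro s _
              simp only [hghigh]
              by_cases hs : wt s ≤ c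
              · rw [if_pos hs]
                norm_num
                positivity
              · rw [if_neg hs]
                simp only [hgl]
                rw [mul_pow]
                apply mul_le_mul_of_nonneg_right _ (sq_nonneg _)
                rw [← pow_mul, ← pow_mul]
                apply pow_le_pow_of_le_one hM0.le (by linarith)
                omega
          _ = ((1 - lammin) ^ c) ^ 2 * ∑ s, (fhat p s) ^ 2 := by rw [← Finset.mul_sum]
          _ ≤ ((1 - lammin) ^ c) ^ 2 * (α / 4 ^ n) := by
              apply mul_le_mul_of_nonneg_left hPar (by positivity)
      calc l1 (synth ghigh) ≤ 2 ^ n * Real.sqrt (∑ s, ghigh s ^ 2) := l1_synth_le_l2 _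
        _ ≤ 2 ^ n * Real.sqrt (((1 - lammin) ^ c) ^ 2 * (α / 4 ^ n)) := by
            apply mul_le_mul_of_nonneg_left (Real.sqrt_le_sqrt hsq) (by positivity)
        _ = (1 - lammin) ^ c * Real.sqrt α := by
            have h4 : ((2:ℝ) ^ n) ^ 2 = 4 ^ n := by
              rw [← pow_mul, show (4:ℝ) = 2 ^ 2 by norm_num, ← pow_mul, mul_comm]
            have hkey : ((1 - lammin) ^ c) ^ 2 * (α / 4 ^ n)
                = ((1 - lammin) ^ c * Real.sqrt α / 2 ^ n) ^ 2 := by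
              rw [div_pow, mul_pow, Real.sq_sqrt (by linarith : (0:ℝ) ≤ α), h4]
              field_simp
            rw [hkey, Real.sqrt_sq (by positivity)]
            field_simp
        _ ≤ (1 / K) * Real.sqrt α := by
            apply mul_le_mul_of_nonneg_right htail hsqα0.le
        _ = δ / 10 := by
            rw [one_div, ← div_eq_inv_mul, hsqαK]
    calc l1 (fun x => synth glow x + synth ghigh x)
        ≤ l1 (synth glow) + l1 (synth ghigh) := by
          unfold l1
          rw [← Finset.sum_add_distrib]
          exact Finset.sum_le_sum fun x _ => abs_add_le _ _
      _ ≤ δ / 5 + δ / 10 := add_le_add hlow hhigh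
      _ = 3 * δ / 10 := by ring
  -- ## Term 3
  have hT3 : l1 (fun x => q x - r x) ≤ 6 * δ / 10 := by
    rw [hqr]
    have hmaj : ∑ x ∈ Finset.univ.filter (fun x : Fin n → Bool => q x < 0), |q x|
        ≤ l1 (fun x => pl x - q x) := by
      calc ∑ x ∈ Finset.univ.filter (fun x : Fin n → Bool => q x < 0), |q x|
          ≤ ∑ x ∈ Finset.univ.filter (fun x : Fin n → Bool => q x < 0), |pl x - q x| := by
            apply Finset.sum_le_sum
            intro x hx
            have hqx : q x < 0 := (Finset.mem_filter.mp hx).2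
            have hplx := hpl0 x
            rw [abs_of_neg hqx, abs_of_nonneg (by linarith)]
            linarith
        _ ≤ ∑ x, |pl x - q x| := by
            apply Finset.sum_le_sum_of_subset_of_nonneg (Finset.filter_subset _ _)
            intro x _ _
            exact abs_nonneg _
        _ = l1 (fun x => pl x - q x) := rfl
    linarith [hT2]
  -- ## assembly
  have hcontr2 : l1 (fun x => noiseComp δ₂ pl x - noiseComp δ₂ q x) ≤ 3 * δ / 10 := by
    have := noiseComp_sub δ₂ pl q
    calc l1 (fun x => noiseComp δ₂ pl x - noiseComp δ₂ q x)
        = l1 (noiseComp δ₂ (fun x => pl x - q x)) := by rw [this]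
      _ ≤ l1 (fun x => pl x - q x) := l1_noiseComp_le δ₂ hδ₂b _
      _ ≤ 3 * δ / 10 := hT2
  have hcontr3 : l1 (fun x => noiseComp δ₂ q x - noiseComp δ₂ r x) ≤ 6 * δ / 10 := by
    have := noiseComp_sub δ₂ q r
    calc l1 (fun x => noiseComp δ₂ q x - noiseComp δ₂ r x)
        = l1 (noiseComp δ₂ (fun x => q x - r x)) := by rw [this]
      _ ≤ l1 (fun x => q x - r x) := l1_noiseComp_le δ₂ hδ₂b _
      _ ≤ 6 * δ / 10 := hT3
  have htri := l1_triangle3 ptB (noiseComp δ₂ pl) (noiseComp δ₂ q) (noiseComp δ₂ r)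
  have hfinal : l1 (fun x => ptB x - noiseComp δ₂ r x) ≤ δ := by
    calc l1 (fun x => ptB x - noiseComp δ₂ r x)
        ≤ _ := htri
      _ ≤ δ / 10 + 3 * δ / 10 + 6 * δ / 10 := by
          have := add_le_add (add_le_add hT1 hcontr2) hcontr3
          linarith
      _ = δ := by ring
  have hcoef : 1 ≤ 1 + 1 / (1 - lammin) := by
    have : 0 < 1 / (1 - lammin) := by positivity
    linarith
  calc l1 (fun x => ptB x - noiseComp δ₂ r x) ≤ δ := hfinal
    _ = 1 * δ := (one_mul δ).symm
    _ ≤ (1 + 1 / (1 - lammin)) * δ := by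
        apply mul_le_mul_of_nonneg_right hcoef hδ0.le
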